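/- Symmetrization identity for the H(curl) advection operator (identity (5.2), curl case): Let u, β : ℝ³ → ℝ³ be differentiable at a point x ∈ ℝ³. Then (L^{curl}_β u)(x) + ((L^{curl}_β)^* u)(x) = (Dβ(x) + Dβ(x)ᵀ) u(x) − (div β)(x) u(x); that is, ∇(β·u)(x) + (curl u)(x) × β(x) − β(x) (div u)(x) + curl(β × u)(x) = (Dβ(x) + Dβ(x)ᵀ − (div β)(x) I) u(x). -/

import Mathlib

open Finset

noncomputable section

/-- Points of `ℝ³`. -/
abbrev V3 := Fin 3 → ℝ

/-- Euclidean dot product on `ℝ³`. -/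
def dot3 (a b : V3) : ℝ := ∑ i, a i * b i

/-- Cross product on `ℝ³`. -/
def cross3 (a b : V3) : V3 :=
  ![a 1 * b 2 - a 2 * b 1, a 2 * b 0 - a 0 * b 2, a 0 * b 1 - a 1 * b 0]

/-- The `j`-th standard basis vector of `ℝ³`. -/
def e3 (j : Fin 3) : V3 := Pi.single j 1

/-- Partial derivative `∂ⱼ wᵢ (x)` of a vector field `w : ℝ³ → ℝ³`. -/
def pd (w : V3 → V3) (x : V3) (i j : Fin 3) : ℝ := fderiv ℝ w x (e3 j) i

/-- Divergence `div w = ∂₁w₁ + ∂₂w₂ + ∂₃w₃` of a vector field at a point. -/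
def divg (w : V3 → V3) (x : V3) : ℝ := ∑ i, pd w x i i

/-- Curl `(∂₂w₃ − ∂₃w₂, ∂₃w₁ − ∂₁w₃, ∂₁w₂ − ∂₂w₁)` of a vector field at a point
(0-based indices). -/
def curl3 (w : V3 → V3) (x : V3) : V3 :=
  ![pd w x 2 1 - pd w x 1 2, pd w x 0 2 - pd w x 2 0, pd w x 1 0 - pd w x 0 1]

/-- Gradient `∇f = (∂₁f, ∂₂f, ∂₃f)` of a scalar function at a point. -/
def grad3 (f : V3 → ℝ) (x : V3) : V3 := fun j => fderiv ℝ f x (e3 j)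

/-- Jacobian matrix `Dw(x)` with entries `(Dw)ᵢⱼ = ∂ⱼwᵢ`. -/
def jac (w : V3 → V3) (x : V3) : Matrix (Fin 3) (Fin 3) ℝ :=
  Matrix.of fun i j => pd w x i j

/-- The `H(curl)` advection operator `L^curl_β u = ∇(β·u) + (curl u) × β`. -/
def Lcurl (β u : V3 → V3) (x : V3) : V3 :=
  grad3 (fun y => dot3 (β y) (u y)) x + cross3 (curl3 u x) (β x)

/-- Formal adjoint `(L^curl_β)^* u = −β (div u) + curl(β × u)`. -/
def LcurlAdj (β u : V3 → V3) (x : V3) : V3 :=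
  -(divg u x • β x) + curl3 (fun y => cross3 (β y) (u y)) x

/-- The `H(div)` advection operator `L^div_β u = β (div u) − curl(β × u)`. -/
def Ldiv (β u : V3 → V3) (x : V3) : V3 :=
  divg u x • β x - curl3 (fun y => cross3 (β y) (u y)) x

/-- Formal adjoint `(L^div_β)^* u = −∇(β·u) − (curl u) × β`. -/
def LdivAdj (β u : V3 → V3) (x : V3) : V3 :=
  -grad3 (fun y => dot3 (β y) (u y)) x - cross3 (curl3 u x) (β x)

end

/-- **Symmetrization identity for the `H(curl)` advection operator** (identity
(5.2), curl case): for `u, β` differentiable at `x`,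
`L^curl_β u + (L^curl_β)^* u = (Dβ + Dβᵀ) u − (div β) u` at `x`. -/
theorem curl_symmetrization_identity
    (u β : V3 → V3) (x : V3)
    (hu : DifferentiableAt ℝ u x) (hβ : DifferentiableAt ℝ β x) :
    Lcurl β u x + LcurlAdj β u x =
      (jac β x + (jac β x).transpose).mulVec (u x) - divg β x • u x := by

  have hb : ∀ i, DifferentiableAt ℝ (fun y => β y i) x := fun i => differentiableAt_pi.mp hβ i
  have hv : ∀ i, DifferentiableAt ℝ (fun y => u y i) x := fun i => differentiableAt_pi.mp hu i
  have hpd : ∀ (w : V3 → V3), DifferentiableAt ℝ w x → ∀ i j,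
      pd w x i j = fderiv ℝ (fun y => w y i) x (e3 j) := by
    intro w hw i j
    rw [pd, fderiv_pi (differentiableAt_pi.mp hw)]
    rfl
  have hmul : ∀ (a b j : Fin 3), fderiv ℝ (fun y => β y a * u y b) x (e3 j)
      = pd β x a j * u x b + β x a * pd u x b j := by
    intro a b j
    rw [fderiv_fun_mul (hb a) (hv b)]
    simp only [ContinuousLinearMap.add_apply, ContinuousLinearMap.smul_apply, smul_eq_mul,
      hpd β hβ, hpd u hu]
    ring
  have key : ∀ (a b c d j : Fin 3),
      fderiv ℝ (fun y => β y a * u y b - β y c * u y d) x (e3 j)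
        = pd β x a j * u x b + β x a * pd u x b j
          - (pd β x c j * u x d + β x c * pd u x d j) := by
    intro a b c d j
    rw [fderiv_fun_sub ((hb a).fun_mul (hv b)) ((hb c).fun_mul (hv d)), ContinuousLinearMap.sub_apply,
      hmul, hmul]
  have hw : DifferentiableAt ℝ (fun y => cross3 (β y) (u y)) x := by
    rw [differentiableAt_pi]
    intro i
    fin_cases i <;> simp only [cross3, Matrix.cons_val_zero, Matrix.cons_val_one,
      Matrix.head_cons, Matrix.cons_val_two, Matrix.tail_cons, Fin.isValue] <;>
      exact ((hb _).mul (hv _)).sub ((hb _).mul (hv _))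
  have hc0 : (fun y => cross3 (β y) (u y) 0) = fun y => β y 1 * u y 2 - β y 2 * u y 1 := by
    funext y; simp [cross3]
  have hc1 : (fun y => cross3 (β y) (u y) 1) = fun y => β y 2 * u y 0 - β y 0 * u y 2 := by
    funext y; simp [cross3]
  have hc2 : (fun y => cross3 (β y) (u y) 2) = fun y => β y 0 * u y 1 - β y 1 * u y 0 := by
    funext y; simp [cross3]
  have w21 : pd (fun y => cross3 (β y) (u y)) x 2 1
      = pd β x 0 1 * u x 1 + β x 0 * pd u x 1 1 - (pd β x 1 1 * u x 0 + β x 1 * pd u x 0 1) := by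
    rw [hpd _ hw, hc2, key]
  have w12 : pd (fun y => cross3 (β y) (u y)) x 1 2
      = pd β x 2 2 * u x 0 + β x 2 * pd u x 0 2 - (pd β x 0 2 * u x 2 + β x 0 * pd u x 2 2) := by
    rw [hpd _ hw, hc1, key]
  have w02 : pd (fun y => cross3 (β y) (u y)) x 0 2
      = pd β x 1 2 * u x 2 + β x 1 * pd u x 2 2 - (pd β x 2 2 * u x 1 + β x 2 * pd u x 1 2) := by
    rw [hpd _ hw, hc0, key]
  have w20 : pd (fun y => cross3 (β y) (u y)) x 2 0
      = pd β x 0 0 * u x 1 + β x 0 * pd u x 1 0 - (pd β x 1 0 * u x 0 + β x 1 * pd u x 0 0) := by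
    rw [hpd _ hw, hc2, key]
  have w10 : pd (fun y => cross3 (β y) (u y)) x 1 0
      = pd β x 2 0 * u x 0 + β x 2 * pd u x 0 0 - (pd β x 0 0 * u x 2 + β x 0 * pd u x 2 0) := by
    rw [hpd _ hw, hc1, key]
  have w01 : pd (fun y => cross3 (β y) (u y)) x 0 1
      = pd β x 1 1 * u x 2 + β x 1 * pd u x 2 1 - (pd β x 2 1 * u x 1 + β x 2 * pd u x 1 1) := by
    rw [hpd _ hw, hc0, key]
  have grad_eq : ∀ j, fderiv ℝ (fun y => dot3 (β y) (u y)) x (e3 j)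
      = ∑ k, (pd β x k j * u x k + β x k * pd u x k j) := by
    intro j
    have hd : (fun y => dot3 (β y) (u y)) = fun y => ∑ k : Fin 3, β y k * u y k := rfl
    rw [hd, fderiv_fun_sum (fun k _ => (hb k).fun_mul (hv k))]
    simp [hmul]
  funext i
  fin_cases i <;>
  · simp only [Lcurl, LcurlAdj, Pi.add_apply, Pi.neg_apply, Pi.smul_apply, Pi.sub_apply,
      smul_eq_mul, Fin.zero_eta, Fin.mk_one, Fin.reduceFinMk, Fin.isValue, grad3, curl3,
      Matrix.cons_val_zero, Matrix.cons_val_one, Matrix.head_cons, Matrix.cons_val_two,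
      Matrix.tail_cons, w21, w12, w02, w20, w10, w01, grad_eq, Fin.sum_univ_three]
    simp only [cross3, divg, jac, Matrix.mulVec, dotProduct, Matrix.add_apply,
      Matrix.transpose_apply, Matrix.of_apply, Fin.sum_univ_three, Fin.isValue,
      Matrix.cons_val_zero, Matrix.cons_val_one, Matrix.head_cons, Matrix.cons_val_two,
      Matrix.tail_cons]
    ring
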